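/- Suppose y_i = x_i'β + ε_i where the ε_i are mutually independent, E[ε_i] = 0, and E[ε_i²] = σ_i². If max_i P_ii < 1, then the leave-out estimator θ̂ = β̂'Aβ̂ − Σ_{i=1}^n B_ii σ̂_i² is unbiased for θ = β'Aβ, i.e., E[θ̂] = β'Aβ. -/

import Mathlib

open Matrix BigOperators Finset MeasureTheory ProbabilityTheory

section Helpers

variable {n k : ℕ} {ι : Type*}

private lemma lou_mulVec_sum_smul (M : Matrix (Fin k) (Fin k) ℝ) (s : Finset ι) (c : ι → ℝ)
    (w : ι → Fin k → ℝ) :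
    M *ᵥ (∑ j ∈ s, c j • w j) = ∑ j ∈ s, c j • (M *ᵥ w j) := by
  ext i
  simp [mulVec, dotProduct, Finset.sum_apply, Finset.mul_sum]
  rw [Finset.sum_comm]
  exact Finset.sum_congr rfl fun a _ => Finset.sum_congr rfl fun b _ => by ring

private lemma lou_sum_smul_dotProduct (s : Finset ι) (c : ι → ℝ) (w : ι → Fin k → ℝ)
    (v : Fin k → ℝ) :
    v ⬝ᵥ (∑ j ∈ s, c j • w j) = ∑ j ∈ s, c j * (v ⬝ᵥ w j) := by
  simp [dotProduct, Finset.sum_apply, Finset.sum_mul, Finset.mul_sum]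
  rw [Finset.sum_comm]
  exact Finset.sum_congr rfl fun a _ => Finset.sum_congr rfl fun b _ => by ring

private lemma lou_dotProduct_sum_smul (s : Finset ι) (c : ι → ℝ) (w : ι → Fin k → ℝ)
    (v : Fin k → ℝ) :
    (∑ j ∈ s, c j • w j) ⬝ᵥ v = ∑ j ∈ s, c j * (w j ⬝ᵥ v) := by
  simp [dotProduct, Finset.sum_apply, Finset.sum_mul, Finset.mul_sum]
  rw [Finset.sum_comm]
  exact Finset.sum_congr rfl fun a _ => Finset.sum_congr rfl fun b _ => by ring

private lemma lou_sum_vecMulVec_mulVec (s : Finset ι) (w : ι → Fin k → ℝ) (v : Fin k → ℝ) :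
    (∑ j ∈ s, vecMulVec (w j) (w j)) *ᵥ v = ∑ j ∈ s, (w j ⬝ᵥ v) • w j := by
  ext i
  simp [mulVec, dotProduct, vecMulVec_apply, Matrix.sum_apply, Finset.sum_apply,
    Finset.sum_mul, Finset.mul_sum]
  rw [Finset.sum_comm]
  exact Finset.sum_congr rfl fun a _ => Finset.sum_congr rfl fun b _ => by ring

private lemma lou_quad_expand (A : Matrix (Fin k) (Fin k) ℝ) (β : Fin k → ℝ) (e : Fin n → ℝ)
    (v : Fin n → Fin k → ℝ) :
    (β + ∑ j, e j • v j) ⬝ᵥ A *ᵥ (β + ∑ j, e j • v j)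
      = β ⬝ᵥ A *ᵥ β + (∑ j, e j * (β ⬝ᵥ A *ᵥ v j)) + (∑ j, e j * (v j ⬝ᵥ A *ᵥ β))
        + ∑ j, ∑ l, (e j * e l) * (v j ⬝ᵥ A *ᵥ v l) := by
  rw [Matrix.mulVec_add, lou_mulVec_sum_smul, dotProduct_add, add_dotProduct, add_dotProduct,
    lou_sum_smul_dotProduct, lou_dotProduct_sum_smul, lou_dotProduct_sum_smul]
  simp only [lou_sum_smul_dotProduct]
  have hd : ∑ j, e j * ∑ l, e l * (v j ⬝ᵥ A *ᵥ v l)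
      = ∑ j, ∑ l, (e j * e l) * (v j ⬝ᵥ A *ᵥ v l) := by
    refine Finset.sum_congr rfl fun j _ => ?_
    rw [Finset.mul_sum]
    exact Finset.sum_congr rfl fun l _ => by ring
  rw [hd]; ring

private lemma lou_det_unit {S : Matrix (Fin k) (Fin k) ℝ} {v : Fin k → ℝ}
    (hS : IsUnit S.det) (hP : v ⬝ᵥ S⁻¹.mulVec v < 1) :
    IsUnit (S - vecMulVec v v).det := by
  have hcol : replicateCol Unit (-v) = -replicateCol Unit v := by ext i j; simp
  have h1 : S - vecMulVec v v = S + replicateCol Unit (-v) * replicateRow Unit v := by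
    rw [vecMulVec_eq Unit, hcol, Matrix.neg_mul, ← sub_eq_add_neg]
  rw [h1, det_add_replicateCol_mul_replicateRow hS]
  have h2 : (1 + replicateRow Unit v * S⁻¹ * replicateCol Unit (-v)).det = 1 - v ⬝ᵥ S⁻¹.mulVec v := by
    rw [det_unique]
    simp only [Pi.add_apply, Matrix.add_apply, Matrix.one_apply_eq, Matrix.mul_apply]
    simp [Matrix.mul_apply, mulVec, dotProduct, Finset.mul_sum, Finset.sum_mul, sub_eq_add_neg]
    · ring_nf
      rw [Finset.sum_comm]
  rw [h2]
  exact hS.mul (isUnit_iff_ne_zero.2 (by linarith))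

end Helpers

/-- with independent mean-zero heteroscedastic errors and all leverages
strictly below one, the leave-out estimator `θ̂ = β̂'Aβ̂ − Σ_i B_ii σ̂_i²` is unbiased
for `θ = β'Aβ`. -/
theorem leave_out_estimator_unbiased {Ω : Type*} [MeasurableSpace Ω]
    (μ : Measure Ω) [IsProbabilityMeasure μ]
    {n k : ℕ} (x : Fin n → Fin k → ℝ) (β : Fin k → ℝ)
    (ε : Fin n → Ω → ℝ) (σ : Fin n → ℝ)
    (hmeas : ∀ i, Measurable (ε i))
    (hindep : iIndepFun ε μ)
    (hL2 : ∀ i, MemLp (ε i) 2 μ)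
    (hmean : ∀ i, ∫ ω, ε i ω ∂μ = 0)
    (hvar : ∀ i, ∫ ω, (ε i ω) ^ 2 ∂μ = (σ i) ^ 2)
    (y : Fin n → Ω → ℝ) (hy : ∀ i ω, y i ω = x i ⬝ᵥ β + ε i ω)
    (A Sxx : Matrix (Fin k) (Fin k) ℝ)
    (hA : A.IsSymm)
    (hSxx : Sxx = ∑ i, vecMulVec (x i) (x i))
    (hS : IsUnit Sxx.det)
    (hP : ∀ i, x i ⬝ᵥ Sxx⁻¹.mulVec (x i) < 1)
    (βhat : Ω → Fin k → ℝ)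
    (hβ : ∀ ω, βhat ω = Sxx⁻¹.mulVec (∑ j, y j ω • x j))
    (βhati : Fin n → Ω → Fin k → ℝ)
    (hβi : ∀ i ω, βhati i ω = (Sxx - vecMulVec (x i) (x i))⁻¹.mulVec
      (∑ j ∈ Finset.univ.erase i, y j ω • x j)) :
    ∫ ω, (βhat ω ⬝ᵥ A.mulVec (βhat ω)
        - ∑ i, (x i ⬝ᵥ (Sxx⁻¹ * A * Sxx⁻¹).mulVec (x i))
            * (y i ω * (y i ω - x i ⬝ᵥ βhati i ω))) ∂μ
      = β ⬝ᵥ A.mulVec β := by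
  classical
  set v : Fin n → Fin k → ℝ := fun j => Sxx⁻¹ *ᵥ x j with hv
  set d : Fin n → Fin n → ℝ :=
    fun i j => x i ⬝ᵥ (Sxx - vecMulVec (x i) (x i))⁻¹ *ᵥ x j with hd
  set B : Fin n → ℝ := fun i => x i ⬝ᵥ (Sxx⁻¹ * A * Sxx⁻¹) *ᵥ x i with hB
  set m : Fin n → ℝ := fun i => x i ⬝ᵥ β with hm
  -- invertibility of leave-one-out Gram matrices
  have hSiu : ∀ i, IsUnit (Sxx - vecMulVec (x i) (x i)).det :=
    fun i => lou_det_unit hS (hP i)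
  -- basic integrability and moment facts
  have hInt : ∀ j, Integrable (ε j) μ := fun j => (hL2 j).integrable one_le_two
  have hIntM : ∀ j l, Integrable (fun ω => ε j ω * ε l ω) μ := by
    intro j l
    rcases eq_or_ne j l with rfl | hne
    · simpa [pow_two] using (hL2 j).integrable_sq
    · exact (hindep.indepFun hne).integrable_mul (hInt j) (hInt l)
  have hMul0 : ∀ j l, j ≠ l → ∫ ω, ε j ω * ε l ω ∂μ = 0 := by
    intro j l hne
    have := (hindep.indepFun hne).integral_fun_mul_eq_mul_integral (hInt j).1 (hInt l).1
    simpa [hmean j, hmean l] using this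
  have hMulD : ∀ j, ∫ ω, ε j ω * ε j ω ∂μ = σ j ^ 2 := by
    intro j
    simpa [pow_two] using hvar j
  -- decompositions of the estimators
  have hbhat : ∀ ω, βhat ω = β + ∑ j, ε j ω • v j := by
    intro ω
    have h1 : ∑ j, y j ω • x j = Sxx *ᵥ β + ∑ j, ε j ω • x j := by
      rw [hSxx, lou_sum_vecMulVec_mulVec, ← Finset.sum_add_distrib]
      exact Finset.sum_congr rfl fun j _ => by rw [hy j ω, add_smul]
    rw [hβ ω, h1, Matrix.mulVec_add, Matrix.mulVec_mulVec, Matrix.nonsing_inv_mul _ hS,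
      Matrix.one_mulVec, lou_mulVec_sum_smul]
  have hbhati : ∀ i ω, βhati i ω
      = β + ∑ j ∈ Finset.univ.erase i, ε j ω • ((Sxx - vecMulVec (x i) (x i))⁻¹ *ᵥ x j) := by
    intro i ω
    have h1 : ∑ j ∈ Finset.univ.erase i, y j ω • x j
        = (Sxx - vecMulVec (x i) (x i)) *ᵥ β + ∑ j ∈ Finset.univ.erase i, ε j ω • x j := by
      have h2 : Sxx - vecMulVec (x i) (x i)
          = ∑ j ∈ Finset.univ.erase i, vecMulVec (x j) (x j) := by
        rw [hSxx, ← Finset.sum_erase_add _ _ (Finset.mem_univ i), add_sub_cancel_right]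
      rw [h2, lou_sum_vecMulVec_mulVec, ← Finset.sum_add_distrib]
      exact Finset.sum_congr rfl fun j _ => by rw [hy j ω, add_smul]
    rw [hβi i ω, h1, Matrix.mulVec_add, Matrix.mulVec_mulVec,
      Matrix.nonsing_inv_mul _ (hSiu i), Matrix.one_mulVec, lou_mulVec_sum_smul]
  have hresid : ∀ i ω, y i ω - x i ⬝ᵥ βhati i ω
      = ε i ω - ∑ j ∈ Finset.univ.erase i, ε j ω * d i j := by
    intro i ω
    rw [hbhati i ω, dotProduct_add, lou_sum_smul_dotProduct, hy i ω]
    simp [hd, hm]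
  -- symmetry facts
  have hSsymm : Sxxᵀ = Sxx := by
    rw [hSxx, Matrix.transpose_sum]
    exact Finset.sum_congr rfl fun j _ => by
      ext a b; simp [vecMulVec_apply, Matrix.transpose_apply, mul_comm]
  have hSinvsymm : Sxx⁻¹ᵀ = Sxx⁻¹ := by rw [Matrix.transpose_nonsing_inv, hSsymm]
  have hvAv : ∀ j, v j ⬝ᵥ A *ᵥ v j = B j := by
    intro j
    have hswap : x j ᵥ* Sxx⁻¹ = Sxx⁻¹ *ᵥ x j := by
      conv_lhs => rw [← hSinvsymm]
      rw [Matrix.vecMul_transpose]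
    have key : ∀ z, x j ⬝ᵥ Sxx⁻¹ *ᵥ z = (Sxx⁻¹ *ᵥ x j) ⬝ᵥ z := by
      intro z
      rw [Matrix.dotProduct_mulVec, hswap]
    simp only [hv, hB]
    rw [← Matrix.mulVec_mulVec, ← Matrix.mulVec_mulVec, key]
  -- pointwise expansion of the quadratic form
  have h1 : (fun ω => βhat ω ⬝ᵥ A *ᵥ βhat ω)
      = fun ω => β ⬝ᵥ A *ᵥ β + (∑ j, ε j ω * (β ⬝ᵥ A *ᵥ v j)) + (∑ j, ε j ω * (v j ⬝ᵥ A *ᵥ β))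
          + ∑ j, ∑ l, (ε j ω * ε l ω) * (v j ⬝ᵥ A *ᵥ v l) := by
    funext ω
    rw [hbhat ω]
    exact lou_quad_expand A β (fun j => ε j ω) v
  have iS1 : Integrable (fun ω => ∑ j, ε j ω * (β ⬝ᵥ A *ᵥ v j)) μ :=
    integrable_finset_sum _ fun j _ => (hInt j).mul_const _
  have iS2 : Integrable (fun ω => ∑ j, ε j ω * (v j ⬝ᵥ A *ᵥ β)) μ :=
    integrable_finset_sum _ fun j _ => (hInt j).mul_const _
  have iD : Integrable (fun ω => ∑ j, ∑ l, (ε j ω * ε l ω) * (v j ⬝ᵥ A *ᵥ v l)) μ :=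
    integrable_finset_sum _ fun j _ => integrable_finset_sum _ fun l _ => (hIntM j l).mul_const _
  have hIq : Integrable (fun ω => βhat ω ⬝ᵥ A *ᵥ βhat ω) μ := by
    rw [h1]
    exact (((integrable_const _).add iS1).add iS2).add iD
  have hES : ∀ (c : Fin n → ℝ), ∫ ω, (∑ j, ε j ω * c j) ∂μ = 0 := by
    intro c
    rw [integral_finset_sum _ fun j _ => (hInt j).mul_const _]
    simp [integral_mul_const, hmean]
  have hEq1 : ∫ ω, βhat ω ⬝ᵥ A *ᵥ βhat ω ∂μ = β ⬝ᵥ A *ᵥ β + ∑ j, B j * σ j ^ 2 := by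
    have iA1 : Integrable (fun ω => β ⬝ᵥ A *ᵥ β + (∑ j, ε j ω * (β ⬝ᵥ A *ᵥ v j))) μ :=
      (integrable_const _).add iS1
    have iA2 : Integrable (fun ω => β ⬝ᵥ A *ᵥ β + (∑ j, ε j ω * (β ⬝ᵥ A *ᵥ v j))
        + (∑ j, ε j ω * (v j ⬝ᵥ A *ᵥ β))) μ := iA1.add iS2
    rw [h1, integral_add iA2 iD, integral_add iA1 iS2,
      integral_add (integrable_const (β ⬝ᵥ A *ᵥ β)) iS1, integral_const, hES, hES]
    have hD : ∫ ω, (∑ j, ∑ l, (ε j ω * ε l ω) * (v j ⬝ᵥ A *ᵥ v l)) ∂μ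
        = ∑ j, B j * σ j ^ 2 := by
      rw [integral_finset_sum _ fun j _ =>
        integrable_finset_sum _ fun l _ => (hIntM j l).mul_const _]
      refine Finset.sum_congr rfl fun j _ => ?_
      rw [integral_finset_sum _ fun l _ => (hIntM j l).mul_const _]
      rw [Finset.sum_eq_single j]
      · rw [integral_mul_const, hMulD j, hvAv j]; ring
      · intro l _ hlj
        rw [integral_mul_const, hMul0 j l (Ne.symm hlj)]; ring
      · intro h; exact absurd (Finset.mem_univ j) h
    rw [hD]
    simp [measure_univ]
  -- pointwise expansion of the leave-out residual products
  have hprod : ∀ i ω, y i ω * (y i ω - x i ⬝ᵥ βhati i ω)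
      = m i * ε i ω + ε i ω * ε i ω
        - ∑ j ∈ Finset.univ.erase i, (m i * d i j) * ε j ω
        - ∑ j ∈ Finset.univ.erase i, d i j * (ε i ω * ε j ω) := by
    intro i ω
    have e1 : (m i + ε i ω) * ∑ j ∈ Finset.univ.erase i, ε j ω * d i j
        = (∑ j ∈ Finset.univ.erase i, (m i * d i j) * ε j ω)
          + ∑ j ∈ Finset.univ.erase i, d i j * (ε i ω * ε j ω) := by
      rw [Finset.mul_sum, ← Finset.sum_add_distrib]
      exact Finset.sum_congr rfl fun j _ => by ring
    rw [hresid i ω, hy i ω]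
    simp only [hm] at e1 ⊢
    rw [mul_sub, e1]
    ring
  -- integrability & expectation of the residual products
  have hIg : ∀ i, Integrable (fun ω => y i ω * (y i ω - x i ⬝ᵥ βhati i ω)) μ := by
    intro i
    have h2 : (fun ω => y i ω * (y i ω - x i ⬝ᵥ βhati i ω))
        = fun ω => m i * ε i ω + ε i ω * ε i ω
            - ∑ j ∈ Finset.univ.erase i, (m i * d i j) * ε j ω
            - ∑ j ∈ Finset.univ.erase i, d i j * (ε i ω * ε j ω) :=
      funext fun ω => hprod i ω
    rw [h2]
    exact ((((hInt i).const_mul _).add (hIntM i i)).sub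
      (integrable_finset_sum _ fun j _ => (hInt j).const_mul _)).sub
      (integrable_finset_sum _ fun j _ => (hIntM i j).const_mul _)
  have hEg : ∀ i, ∫ ω, y i ω * (y i ω - x i ⬝ᵥ βhati i ω) ∂μ = σ i ^ 2 := by
    intro i
    have h2 : (fun ω => y i ω * (y i ω - x i ⬝ᵥ βhati i ω))
        = fun ω => m i * ε i ω + ε i ω * ε i ω
            - ∑ j ∈ Finset.univ.erase i, (m i * d i j) * ε j ω
            - ∑ j ∈ Finset.univ.erase i, d i j * (ε i ω * ε j ω) :=
      funext fun ω => hprod i ω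
    have iA1 : Integrable (fun ω => m i * ε i ω + ε i ω * ε i ω) μ :=
      ((hInt i).const_mul _).add (hIntM i i)
    have iA2 : Integrable (fun ω => m i * ε i ω + ε i ω * ε i ω
        - ∑ j ∈ Finset.univ.erase i, (m i * d i j) * ε j ω) μ :=
      iA1.sub (integrable_finset_sum _ fun j _ => (hInt j).const_mul _)
    rw [h2, integral_sub iA2 (integrable_finset_sum _ fun j _ => (hIntM i j).const_mul _),
      integral_sub iA1 (integrable_finset_sum _ fun j _ => (hInt j).const_mul _),
      integral_add ((hInt i).const_mul _) (hIntM i i),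
      integral_const_mul, hmean i, hMulD i,
      integral_finset_sum _ fun j _ => (hInt j).const_mul _,
      integral_finset_sum _ fun j _ => (hIntM i j).const_mul _]
    have z1 : ∑ j ∈ Finset.univ.erase i, ∫ ω, (m i * d i j) * ε j ω ∂μ = 0 :=
      Finset.sum_eq_zero fun j _ => by rw [integral_const_mul, hmean j, mul_zero]
    have z2 : ∑ j ∈ Finset.univ.erase i, ∫ ω, d i j * (ε i ω * ε j ω) ∂μ = 0 :=
      Finset.sum_eq_zero fun j hj => by
        rw [integral_const_mul, hMul0 i j (Ne.symm (Finset.ne_of_mem_erase hj)), mul_zero]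
    rw [z1, z2]
    ring
  -- final assembly
  have hIsum : Integrable (fun ω => ∑ i, B i * (y i ω * (y i ω - x i ⬝ᵥ βhati i ω))) μ :=
    integrable_finset_sum _ fun i _ => (hIg i).const_mul _
  rw [integral_sub hIq hIsum, integral_finset_sum _ fun i _ => (hIg i).const_mul _]
  simp only [integral_const_mul]
  rw [hEq1]
  have : ∑ i, B i * ∫ ω, y i ω * (y i ω - x i ⬝ᵥ βhati i ω) ∂μ = ∑ i, B i * σ i ^ 2 :=
    Finset.sum_congr rfl fun i _ => by rw [hEg i]
  rw [this]
  ring
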